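/- Let l0 ∈ {0,1}, let l1, l2 be natural numbers, let Δψ, Δf1, Δf2 ∈ ℝ, and write g_0 = cos, g_1 = sin. Consider X(N,M) = ∑_{n=0}^{N−1} ∑_{m=0}^{M−1} (2πn)^{l1}·(2πm)^{l2}·g_{l0}(Δψ + 2π·Δf1·n + 2π·Δf2·m). (i) If Δψ = 0, Δf1 = 0 and Δf2 = 0, then X(N,M)/(N^{l1+1}·M^{l2+1}) converges, as N → ∞ and M → ∞ jointly, to (2π)^{l1+l2}/((l1+1)(l2+1)) in case l0 = 0 and to 0 in case l0 = 1. (ii) If Δf1 is not an integer or Δf2 is not an integer, then X(N,M)/(N^{l1+1}·M^{l2+1}) converges to 0 as N → ∞ and M → ∞ jointly. -/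

import Mathlib

open Real Filter

-- Riemann-type inequality: (l+1)*∑_{n<N} n^l ≤ N^(l+1) ≤ (l+1)*(∑_{n<N} n^l + N^l)
lemma sum_pow_ineq (l N : ℕ) :
    ((l:ℝ)+1) * (∑ n ∈ Finset.range N, (n:ℝ)^l) ≤ (N:ℝ)^(l+1) ∧
    (N:ℝ)^(l+1) ≤ ((l:ℝ)+1) * ((∑ n ∈ Finset.range N, (n:ℝ)^l) + (N:ℝ)^l) := by
  have key : (N:ℝ)^(l+1) = ∑ n ∈ Finset.range N, (((n:ℝ)+1)^(l+1) - (n:ℝ)^(l+1)) := by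
    have := Finset.sum_range_sub (fun n => (n:ℝ)^(l+1)) N
    push_cast at this ⊢
    simp at this
    rw [Finset.sum_sub_distrib, this]
  have term : ∀ n : ℕ, ((n:ℝ)+1)^(l+1) - (n:ℝ)^(l+1)
      = ∑ i ∈ Finset.range (l+1), ((n:ℝ)+1)^i * (n:ℝ)^(l-i) := by
    intro n
    have := geom_sum₂_mul ((n:ℝ)+1) (n:ℝ) (l+1)
    simp only [add_sub_cancel_left, mul_one] at this
    rw [← this]
    apply Finset.sum_congr rfl
    intro i hi; simp
  constructor
  · rw [key]
    rw [Finset.mul_sum]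
    apply Finset.sum_le_sum
    intro n _
    rw [term n]
    calc ((l:ℝ)+1) * (n:ℝ)^l = ∑ _i ∈ Finset.range (l+1), (n:ℝ)^l := by
          rw [Finset.sum_const, Finset.card_range, nsmul_eq_mul]; push_cast; ring
      _ ≤ ∑ i ∈ Finset.range (l+1), ((n:ℝ)+1)^i * (n:ℝ)^(l-i) := by
          apply Finset.sum_le_sum
          intro i hi
          have hi' : i ≤ l := Nat.lt_succ_iff.mp (Finset.mem_range.mp hi)
          have h1 : (n:ℝ)^l = (n:ℝ)^i * (n:ℝ)^(l-i) := by
            rw [← pow_add]; congr 1; omega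
          rw [h1]
          apply mul_le_mul_of_nonneg_right _ (by positivity)
          exact pow_le_pow_left₀ (by positivity) (by linarith) i
  · have h2 : ∀ n ∈ Finset.range N, ((n:ℝ)+1)^(l+1) - (n:ℝ)^(l+1)
        ≤ ((l:ℝ)+1) * ((n:ℝ)+1)^l := by
      intro n _
      rw [term n]
      calc ∑ i ∈ Finset.range (l+1), ((n:ℝ)+1)^i * (n:ℝ)^(l-i)
          ≤ ∑ _i ∈ Finset.range (l+1), ((n:ℝ)+1)^l := by
            apply Finset.sum_le_sum
            intro i hi
            have hi' : i ≤ l := Nat.lt_succ_iff.mp (Finset.mem_range.mp hi)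
            have h1 : ((n:ℝ)+1)^l = ((n:ℝ)+1)^i * ((n:ℝ)+1)^(l-i) := by
              rw [← pow_add]; congr 1; omega
            rw [h1]
            apply mul_le_mul_of_nonneg_left _ (by positivity)
            exact pow_le_pow_left₀ (by positivity) (by linarith) _
        _ = ((l:ℝ)+1) * ((n:ℝ)+1)^l := by
            rw [Finset.sum_const, Finset.card_range, nsmul_eq_mul]; push_cast; ring
    have h3 : ∑ n ∈ Finset.range N, (((l:ℝ)+1) * ((n:ℝ)+1)^l)
        ≤ ((l:ℝ)+1) * (∑ n ∈ Finset.range N, (n:ℝ)^l) + ((l:ℝ)+1)*(N:ℝ)^l := by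
      have hsh : ∑ n ∈ Finset.range N, (((l:ℝ)+1) * ((n:ℝ)+1)^l)
          = ∑ n ∈ Finset.range (N+1), (((l:ℝ)+1) * (n:ℝ)^l) - ((l:ℝ)+1)*(0:ℝ)^l := by
        rw [Finset.sum_range_succ' (fun n => ((l:ℝ)+1) * (n:ℝ)^l) N]
        push_cast; ring
      rw [hsh, Finset.sum_range_succ, ← Finset.mul_sum]
      have : (0:ℝ) ≤ ((l:ℝ)+1)*(0:ℝ)^l := by positivity
      linarith
    rw [key]
    calc ∑ n ∈ Finset.range N, (((n:ℝ)+1)^(l+1) - (n:ℝ)^(l+1))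
        ≤ ∑ n ∈ Finset.range N, (((l:ℝ)+1) * ((n:ℝ)+1)^l) := Finset.sum_le_sum h2
      _ ≤ ((l:ℝ)+1) * (∑ n ∈ Finset.range N, (n:ℝ)^l) + ((l:ℝ)+1)*(N:ℝ)^l := h3
      _ = _ := by ring

lemma tendsto_sum_pow_div (l : ℕ) :
    Tendsto (fun N : ℕ => (∑ n ∈ Finset.range N, (n:ℝ)^l) / (N:ℝ)^(l+1)) atTop
      (nhds (1/((l:ℝ)+1))) := by
  have hl : (0:ℝ) < (l:ℝ)+1 := by positivity
  have hbound : ∀ N : ℕ, 1 ≤ N →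
      ‖(∑ n ∈ Finset.range N, (n:ℝ)^l) / (N:ℝ)^(l+1) - 1/((l:ℝ)+1)‖ ≤ 1/(N:ℝ) := by
    intro N hN
    have hN0 : (0:ℝ) < (N:ℝ) := by exact_mod_cast hN
    have hNp : (0:ℝ) < (N:ℝ)^(l+1) := by positivity
    have hNl : (0:ℝ) < (N:ℝ)^l := by positivity
    obtain ⟨h1, h2⟩ := sum_pow_ineq l N
    set a := ∑ n ∈ Finset.range N, (n:ℝ)^l with ha
    set P := (N:ℝ)^(l+1) with hP
    have e1 : a / P - 1/((l:ℝ)+1) = (((l:ℝ)+1)*a - P) / (P*((l:ℝ)+1)) := by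
      field_simp
    rw [Real.norm_eq_abs, e1, abs_div, abs_of_pos (by positivity : (0:ℝ) < P*((l:ℝ)+1))]
    have habs : |((l:ℝ)+1)*a - P| ≤ ((l:ℝ)+1)*(N:ℝ)^l := by
      rw [abs_le]
      constructor
      · nlinarith
      · nlinarith
    calc |((l:ℝ)+1)*a - P| / (P*((l:ℝ)+1))
        ≤ (((l:ℝ)+1)*(N:ℝ)^l) / (P*((l:ℝ)+1)) := by
          gcongr
      _ = 1/(N:ℝ) := by
          rw [hP, pow_succ]
          field_simp
  have h0 : Tendsto (fun N : ℕ => 1/(N:ℝ)) atTop (nhds 0) :=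
    tendsto_one_div_atTop_nhds_zero_nat
  have hsq : Tendsto (fun N : ℕ =>
      (∑ n ∈ Finset.range N, (n:ℝ)^l) / (N:ℝ)^(l+1) - 1/((l:ℝ)+1)) atTop (nhds 0) :=
    squeeze_zero_norm' (Filter.eventually_atTop.mpr ⟨1, hbound⟩) h0
  have := hsq.add_const (1/((l:ℝ)+1))
  simpa using this

lemma abel_bound (l : ℕ) (z : ℂ) (hz : ‖z‖ = 1) (h1 : z ≠ 1) (N : ℕ) :
    ‖∑ n ∈ Finset.range N, (n:ℂ)^l * z^n‖ ≤ 4/‖z-1‖ * (N:ℝ)^l := by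
  have hz1 : (0:ℝ) < ‖z-1‖ := by
    rw [norm_pos_iff]; exact sub_ne_zero.mpr h1
  set B : ℝ := 2/‖z-1‖ with hB
  have hBpos : (0:ℝ) < B := by positivity
  have hG : ∀ k : ℕ, ‖∑ j ∈ Finset.range k, z^j‖ ≤ B := by
    intro k
    rw [geom_sum_eq h1 k, norm_div, hB]
    have hnum : ‖z^k - 1‖ ≤ 2 := by
      calc ‖z^k - 1‖ ≤ ‖z^k‖ + ‖(1:ℂ)‖ := norm_sub_le _ _
        _ = 2 := by rw [norm_pow, hz, one_pow, norm_one]; norm_num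
    gcongr
  have habel := Finset.sum_range_by_parts (fun n => (n:ℂ)^l) (fun n => z^n) N
  simp only [smul_eq_mul] at habel
  rw [habel]
  have hfN : ‖((N-1:ℕ):ℂ)^l‖ ≤ (N:ℝ)^l := by
    rw [norm_pow, Complex.norm_natCast]
    exact pow_le_pow_left₀ (by positivity) (by exact_mod_cast Nat.sub_le N 1) l
  have hdiff : ∀ i : ℕ, ‖((i+1:ℕ):ℂ)^l - ((i:ℕ):ℂ)^l‖ = ((i:ℝ)+1)^l - (i:ℝ)^l := by
    intro i
    have : ((i+1:ℕ):ℂ)^l - ((i:ℕ):ℂ)^l = ((((i:ℝ)+1)^l - (i:ℝ)^l : ℝ) : ℂ) := by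
      push_cast; ring
    rw [this, Complex.norm_real, Real.norm_eq_abs, abs_of_nonneg]
    have : (i:ℝ)^l ≤ ((i:ℝ)+1)^l := pow_le_pow_left₀ (by positivity) (by linarith) l
    linarith
  calc ‖((N-1:ℕ):ℂ)^l * (∑ j ∈ Finset.range N, z^j)
        - ∑ i ∈ Finset.range (N-1), (((i+1:ℕ):ℂ)^l - ((i:ℕ):ℂ)^l) * ∑ j ∈ Finset.range (i+1), z^j‖
      ≤ ‖((N-1:ℕ):ℂ)^l * (∑ j ∈ Finset.range N, z^j)‖
        + ‖∑ i ∈ Finset.range (N-1), (((i+1:ℕ):ℂ)^l - ((i:ℕ):ℂ)^l) * ∑ j ∈ Finset.range (i+1), z^j‖ :=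
        norm_sub_le _ _
    _ ≤ (N:ℝ)^l * B + (N:ℝ)^l * B := by
        apply add_le_add
        · rw [norm_mul]
          exact mul_le_mul hfN (hG N) (norm_nonneg _) (by positivity)
        · calc ‖∑ i ∈ Finset.range (N-1), (((i+1:ℕ):ℂ)^l - ((i:ℕ):ℂ)^l) * ∑ j ∈ Finset.range (i+1), z^j‖
              ≤ ∑ i ∈ Finset.range (N-1), ‖(((i+1:ℕ):ℂ)^l - ((i:ℕ):ℂ)^l) * ∑ j ∈ Finset.range (i+1), z^j‖ :=
                norm_sum_le _ _
            _ ≤ ∑ i ∈ Finset.range (N-1), (((i:ℝ)+1)^l - (i:ℝ)^l) * B := by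
                apply Finset.sum_le_sum
                intro i _
                rw [norm_mul, hdiff i]
                apply mul_le_mul_of_nonneg_left (hG (i+1))
                have : (i:ℝ)^l ≤ ((i:ℝ)+1)^l := pow_le_pow_left₀ (by positivity) (by linarith) l
                linarith
            _ ≤ (N:ℝ)^l * B := by
                rw [← Finset.sum_mul]
                apply mul_le_mul_of_nonneg_right _ (le_of_lt hBpos)
                have htel : ∑ i ∈ Finset.range (N-1), (((i:ℝ)+1)^l - (i:ℝ)^l)
                    = ((N-1:ℕ):ℝ)^l - (0:ℝ)^l := by
                  have h := Finset.sum_range_sub (fun n : ℕ => (n:ℝ)^l) (N-1)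
                  push_cast at h
                  exact_mod_cast h
                rw [htel]
                have h1' : ((N-1:ℕ):ℝ)^l ≤ (N:ℝ)^l :=
                  pow_le_pow_left₀ (by positivity) (by exact_mod_cast Nat.sub_le N 1) l
                have h2' : (0:ℝ) ≤ (0:ℝ)^l := by positivity
                linarith
    _ = 4/‖z-1‖ * (N:ℝ)^l := by rw [hB]; ring

noncomputable def Ps (l : ℕ) (f : ℝ) (N : ℕ) : ℂ :=
  ∑ n ∈ Finset.range N, (((2*π*(n:ℝ))^l : ℝ) : ℂ) *
    Complex.exp (((2*π*f*(n:ℝ)) : ℝ) * Complex.I)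

lemma Ps_eq (l : ℕ) (f : ℝ) (N : ℕ) :
    Ps l f N = (((2*π)^l : ℝ) : ℂ) *
      ∑ n ∈ Finset.range N, (n:ℂ)^l * (Complex.exp (((2*π*f : ℝ)) * Complex.I))^n := by
  rw [Ps, Finset.mul_sum]
  apply Finset.sum_congr rfl
  intro n _
  have he : Complex.exp (((2*π*f*(n:ℝ)) : ℝ) * Complex.I)
      = (Complex.exp (((2*π*f : ℝ)) * Complex.I))^n := by
    rw [← Complex.exp_nat_mul]
    congr 1
    push_cast
    ring
  rw [he]
  push_cast
  ring

lemma Ps_norm_le (l : ℕ) (f : ℝ) (N : ℕ) :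
    ‖Ps l f N‖ ≤ (2*π)^l * (N:ℝ)^(l+1) := by
  rw [Ps]
  calc ‖∑ n ∈ Finset.range N, (((2*π*(n:ℝ))^l : ℝ) : ℂ) *
        Complex.exp (((2*π*f*(n:ℝ)) : ℝ) * Complex.I)‖
      ≤ ∑ n ∈ Finset.range N, ‖(((2*π*(n:ℝ))^l : ℝ) : ℂ) *
        Complex.exp (((2*π*f*(n:ℝ)) : ℝ) * Complex.I)‖ := norm_sum_le _ _
    _ ≤ ∑ _n ∈ Finset.range N, (2*π)^l * (N:ℝ)^l := by
        apply Finset.sum_le_sum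
        intro n hn
        rw [norm_mul, Complex.norm_real, Complex.norm_exp_ofReal_mul_I, mul_one,
          Real.norm_eq_abs, abs_of_nonneg (by positivity)]
        have hn' : (n:ℝ) ≤ (N:ℝ) := by
          exact_mod_cast le_of_lt (Finset.mem_range.mp hn)
        calc (2*π*(n:ℝ))^l ≤ (2*π*(N:ℝ))^l := by
              apply pow_le_pow_left₀ (by positivity)
              have : (0:ℝ) < π := Real.pi_pos
              nlinarith
          _ = (2*π)^l * (N:ℝ)^l := by rw [mul_pow]
    _ = (2*π)^l * (N:ℝ)^(l+1) := by
        rw [Finset.sum_const, Finset.card_range, nsmul_eq_mul, pow_succ]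
        ring

lemma Ps_div_le (l : ℕ) (f : ℝ) (N : ℕ) :
    ‖Ps l f N‖ / (N:ℝ)^(l+1) ≤ (2*π)^l := by
  rcases Nat.eq_zero_or_pos N with h | h
  · subst h
    simp
    positivity
  · have hN : (0:ℝ) < (N:ℝ)^(l+1) := by positivity
    rw [div_le_iff₀ hN]
    exact Ps_norm_le l f N

lemma Ps_tendsto_zero (l : ℕ) (f : ℝ) (hf : ∀ k : ℤ, f ≠ (k:ℝ)) :
    Tendsto (fun N : ℕ => ‖Ps l f N‖ / (N:ℝ)^(l+1)) atTop (nhds 0) := by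
  set z : ℂ := Complex.exp (((2*π*f : ℝ)) * Complex.I) with hzdef
  have hz : ‖z‖ = 1 := Complex.norm_exp_ofReal_mul_I _
  have hz1 : z ≠ 1 := by
    intro hcon
    rw [hzdef, Complex.exp_eq_one_iff] at hcon
    obtain ⟨n, hn⟩ := hcon
    apply hf n
    have h2 : ((2*π*f : ℝ) : ℂ) * Complex.I = (((n:ℝ)*(2*π) : ℝ) : ℂ) * Complex.I := by
      rw [hn]; push_cast; ring
    have h3 : (2*π*f : ℝ) = ((n:ℝ)*(2*π) : ℝ) := by
      have := mul_right_cancel₀ Complex.I_ne_zero h2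
      exact_mod_cast this
    have hπ : (0:ℝ) < π := Real.pi_pos
    field_simp at h3
    nlinarith [h3]
  set C : ℝ := (2*π)^l * (4/‖z-1‖) with hC
  have hCpos : (0:ℝ) ≤ C := by
    have : (0:ℝ) < ‖z-1‖ := by rw [norm_pos_iff]; exact sub_ne_zero.mpr hz1
    positivity
  have hbd : ∀ N : ℕ, 1 ≤ N → ‖‖Ps l f N‖ / (N:ℝ)^(l+1)‖ ≤ C * (1/(N:ℝ)) := by
    intro N hN
    have hN0 : (0:ℝ) < (N:ℝ) := by exact_mod_cast hN
    have hNl : (0:ℝ) < (N:ℝ)^l := by positivity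
    have hPs : ‖Ps l f N‖ ≤ C * (N:ℝ)^l := by
      rw [Ps_eq, norm_mul, Complex.norm_real, Real.norm_eq_abs,
        abs_of_nonneg (by positivity)]
      calc (2*π)^l * ‖∑ n ∈ Finset.range N, (n:ℂ)^l * z^n‖
          ≤ (2*π)^l * (4/‖z-1‖ * (N:ℝ)^l) := by
            apply mul_le_mul_of_nonneg_left (abel_bound l z hz hz1 N) (by positivity)
        _ = C * (N:ℝ)^l := by rw [hC]; ring
    rw [Real.norm_eq_abs, abs_of_nonneg (by positivity)]
    rw [pow_succ, div_le_iff₀ (by positivity)]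
    calc ‖Ps l f N‖ ≤ C * (N:ℝ)^l := hPs
      _ = C * (1/(N:ℝ)) * ((N:ℝ)^l * (N:ℝ)) := by field_simp
  have h0 : Tendsto (fun N : ℕ => C * (1/(N:ℝ))) atTop (nhds 0) := by
    have := tendsto_one_div_atTop_nhds_zero_nat.const_mul C
    simpa using this
  exact squeeze_zero_norm' (Filter.eventually_atTop.mpr ⟨1, hbd⟩) h0

lemma double_eq (l1 l2 : ℕ) (ψ a b : ℝ) (N M : ℕ) :
    (∑ n ∈ Finset.range N, ∑ m ∈ Finset.range M,
      ((((2*π*(n:ℝ))^l1 * (2*π*(m:ℝ))^l2 : ℝ)):ℂ) *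
        Complex.exp (((ψ + 2*π*a*(n:ℝ) + 2*π*b*(m:ℝ) : ℝ)) * Complex.I))
    = Complex.exp ((ψ:ℂ) * Complex.I) * Ps l1 a N * Ps l2 b M := by
  rw [Ps, Ps, mul_assoc (Complex.exp ((ψ:ℂ) * Complex.I)), Finset.sum_mul_sum,
    Finset.mul_sum]
  apply Finset.sum_congr rfl
  intro n _
  rw [Finset.mul_sum]
  apply Finset.sum_congr rfl
  intro m _
  have harg : ((ψ + 2*π*a*(n:ℝ) + 2*π*b*(m:ℝ) : ℝ) : ℂ) * Complex.I
      = (ψ:ℂ) * Complex.I + ((2*π*a*(n:ℝ) : ℝ):ℂ) * Complex.I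
        + ((2*π*b*(m:ℝ) : ℝ):ℂ) * Complex.I := by
    push_cast; ring
  rw [harg, Complex.exp_add, Complex.exp_add]
  push_cast
  ring

theorem stmt13 (l0 l1 l2 : ℕ) (hl0 : l0 = 0 ∨ l0 = 1) (Δψ Δf1 Δf2 : ℝ) :
    let g : ℝ → ℝ := if l0 = 0 then Real.cos else Real.sin
    let X : ℕ → ℕ → ℝ := fun N M =>
      ∑ n ∈ Finset.range N, ∑ m ∈ Finset.range M,
        (2 * π * n) ^ l1 * (2 * π * m) ^ l2 *
          g (Δψ + 2 * π * Δf1 * n + 2 * π * Δf2 * m)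
    ((Δψ = 0 ∧ Δf1 = 0 ∧ Δf2 = 0) →
      Tendsto (fun p : ℕ × ℕ =>
          X p.1 p.2 / ((p.1 : ℝ) ^ (l1 + 1) * (p.2 : ℝ) ^ (l2 + 1)))
        (atTop ×ˢ atTop)
        (nhds (if l0 = 0 then
          (2 * π) ^ (l1 + l2) / (((l1 : ℝ) + 1) * ((l2 : ℝ) + 1)) else 0))) ∧
    (((∀ k : ℤ, Δf1 ≠ (k : ℝ)) ∨ (∀ k : ℤ, Δf2 ≠ (k : ℝ))) →
      Tendsto (fun p : ℕ × ℕ =>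
          X p.1 p.2 / ((p.1 : ℝ) ^ (l1 + 1) * (p.2 : ℝ) ^ (l2 + 1)))
        (atTop ×ˢ atTop) (nhds 0)) := by
  intro g X
  constructor
  · rintro ⟨hψ, h1, h2⟩
    subst hψ h1 h2
    rcases hl0 with h | h <;> subst h
    · -- cosine case
      have hg : g = Real.cos := if_pos rfl
      have hX : ∀ N M : ℕ, X N M =
          ((2*π)^l1 * ∑ n ∈ Finset.range N, (n:ℝ)^l1) *
          ((2*π)^l2 * ∑ m ∈ Finset.range M, (m:ℝ)^l2) := by
        intro N M
        simp only [X, hg]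
        norm_num [Real.cos_zero]
        rw [Finset.mul_sum, Finset.mul_sum, Finset.sum_mul_sum]
        refine Finset.sum_congr rfl fun n _ => ?_
        refine Finset.sum_congr rfl fun m _ => ?_
        simp only [mul_pow]
      have hu := tendsto_sum_pow_div l1
      have hv := tendsto_sum_pow_div l2
      have hT := ((hu.comp (tendsto_fst :
          Tendsto Prod.fst (atTop ×ˢ atTop) atTop)).const_mul ((2*π)^l1)).mul
        ((hv.comp (tendsto_snd :
          Tendsto Prod.snd (atTop ×ˢ atTop) atTop)).const_mul ((2*π)^l2))
      have heq : (fun p : ℕ × ℕ =>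
            X p.1 p.2 / ((p.1 : ℝ) ^ (l1 + 1) * (p.2 : ℝ) ^ (l2 + 1)))
          = fun p : ℕ × ℕ =>
            ((2*π)^l1 * ((∑ n ∈ Finset.range p.1, (n:ℝ)^l1) / (p.1:ℝ)^(l1+1))) *
            ((2*π)^l2 * ((∑ m ∈ Finset.range p.2, (m:ℝ)^l2) / (p.2:ℝ)^(l2+1))) := by
        funext p
        rw [hX p.1 p.2, mul_div_mul_comm, mul_div_assoc, mul_div_assoc]
      have hval : (if (0:ℕ) = 0 then
            (2 * π) ^ (l1 + l2) / (((l1 : ℝ) + 1) * ((l2 : ℝ) + 1)) else (0:ℝ))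
          = ((2*π)^l1 * (1/((l1:ℝ)+1))) * ((2*π)^l2 * (1/((l2:ℝ)+1))) := by
        rw [if_pos rfl, pow_add]
        have n1 : ((l1:ℝ)+1) ≠ 0 := by positivity
        have n2 : ((l2:ℝ)+1) ≠ 0 := by positivity
        field_simp
      rw [heq, hval]
      exact hT
    · -- sine case
      have hg : g = Real.sin := if_neg (by norm_num)
      have hX0 : ∀ N M : ℕ, X N M = 0 := by
        intro N M
        simp [X, hg]
      have heq : (fun p : ℕ × ℕ =>
            X p.1 p.2 / ((p.1 : ℝ) ^ (l1 + 1) * (p.2 : ℝ) ^ (l2 + 1)))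
          = fun _ => (0:ℝ) := by
        funext p; rw [hX0]; simp
      rw [heq, if_neg one_ne_zero]
      exact tendsto_const_nhds
  · intro hf
    have hXle : ∀ N M : ℕ, |X N M| ≤ ‖Ps l1 Δf1 N‖ * ‖Ps l2 Δf2 M‖ := by
      intro N M
      have hd := double_eq l1 l2 Δψ Δf1 Δf2 N M
      have hnorm : ‖Complex.exp ((Δψ:ℂ) * Complex.I) * Ps l1 Δf1 N * Ps l2 Δf2 M‖
          = ‖Ps l1 Δf1 N‖ * ‖Ps l2 Δf2 M‖ := by
        rw [norm_mul, norm_mul, Complex.norm_exp_ofReal_mul_I, one_mul]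
      rcases hl0 with h | h <;> subst h
      · have hg : g = Real.cos := if_pos rfl
        have hre : X N M = (Complex.exp ((Δψ:ℂ) * Complex.I) *
            Ps l1 Δf1 N * Ps l2 Δf2 M).re := by
          simp only [X, hg]
          rw [← hd, Complex.re_sum]
          refine Finset.sum_congr rfl fun n _ => ?_
          rw [Complex.re_sum]
          refine Finset.sum_congr rfl fun m _ => ?_
          rw [Complex.re_ofReal_mul, Complex.exp_ofReal_mul_I_re]
        rw [hre]
        calc |(Complex.exp ((Δψ:ℂ) * Complex.I) * Ps l1 Δf1 N * Ps l2 Δf2 M).re|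
            ≤ ‖Complex.exp ((Δψ:ℂ) * Complex.I) * Ps l1 Δf1 N * Ps l2 Δf2 M‖ := by
              exact Complex.abs_re_le_norm _
          _ = _ := hnorm
      · have hg : g = Real.sin := if_neg (by norm_num)
        have him : X N M = (Complex.exp ((Δψ:ℂ) * Complex.I) *
            Ps l1 Δf1 N * Ps l2 Δf2 M).im := by
          simp only [X, hg]
          rw [← hd, Complex.im_sum]
          refine Finset.sum_congr rfl fun n _ => ?_
          rw [Complex.im_sum]
          refine Finset.sum_congr rfl fun m _ => ?_
          rw [Complex.im_ofReal_mul, Complex.exp_ofReal_mul_I_im]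
        rw [him]
        calc |(Complex.exp ((Δψ:ℂ) * Complex.I) * Ps l1 Δf1 N * Ps l2 Δf2 M).im|
            ≤ ‖Complex.exp ((Δψ:ℂ) * Complex.I) * Ps l1 Δf1 N * Ps l2 Δf2 M‖ := by
              exact Complex.abs_im_le_norm _
          _ = _ := hnorm
    have hgen : ∀ p : ℕ × ℕ, 1 ≤ p.1 → 1 ≤ p.2 →
        |X p.1 p.2 / ((p.1:ℝ)^(l1+1) * (p.2:ℝ)^(l2+1))| ≤
          (‖Ps l1 Δf1 p.1‖/(p.1:ℝ)^(l1+1)) * (‖Ps l2 Δf2 p.2‖/(p.2:ℝ)^(l2+1)) := by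
      intro p h1 h2
      have c1 : (0:ℝ) < (p.1:ℝ) := by exact_mod_cast h1
      have c2 : (0:ℝ) < (p.2:ℝ) := by exact_mod_cast h2
      have d1 : (0:ℝ) < (p.1:ℝ)^(l1+1) := by positivity
      have d2 : (0:ℝ) < (p.2:ℝ)^(l2+1) := by positivity
      rw [abs_div, abs_of_pos (mul_pos d1 d2)]
      calc |X p.1 p.2| / ((p.1:ℝ)^(l1+1) * (p.2:ℝ)^(l2+1))
          ≤ (‖Ps l1 Δf1 p.1‖ * ‖Ps l2 Δf2 p.2‖) /
              ((p.1:ℝ)^(l1+1) * (p.2:ℝ)^(l2+1)) := by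
            gcongr
            exact hXle p.1 p.2
        _ = _ := (div_mul_div_comm _ _ _ _).symm
    have e1 : ∀ᶠ p : ℕ × ℕ in atTop ×ˢ atTop, 1 ≤ p.1 :=
      (tendsto_fst : Tendsto Prod.fst (atTop ×ˢ atTop) atTop).eventually
        (eventually_ge_atTop 1)
    have e2 : ∀ᶠ p : ℕ × ℕ in atTop ×ˢ atTop, 1 ≤ p.2 :=
      (tendsto_snd : Tendsto Prod.snd (atTop ×ˢ atTop) atTop).eventually
        (eventually_ge_atTop 1)
    rcases hf with hf1 | hf2
    · have hzero := Ps_tendsto_zero l1 Δf1 hf1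
      have hT : Tendsto (fun p : ℕ × ℕ =>
          (‖Ps l1 Δf1 p.1‖/(p.1:ℝ)^(l1+1)) * (2*π)^l2)
          (atTop ×ˢ atTop) (nhds 0) := by
        have := (hzero.comp (tendsto_fst :
          Tendsto Prod.fst ((atTop : Filter ℕ) ×ˢ (atTop : Filter ℕ))
            (atTop : Filter ℕ))).mul_const ((2*π)^l2)
        simpa using this
      apply squeeze_zero_norm' _ hT
      filter_upwards [e1, e2] with p h1 h2
      rw [Real.norm_eq_abs]
      refine le_trans (hgen p h1 h2) ?_
      exact mul_le_mul_of_nonneg_left (Ps_div_le l2 Δf2 p.2) (by positivity)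
    · have hzero := Ps_tendsto_zero l2 Δf2 hf2
      have hT : Tendsto (fun p : ℕ × ℕ =>
          (2*π)^l1 * (‖Ps l2 Δf2 p.2‖/(p.2:ℝ)^(l2+1)))
          (atTop ×ˢ atTop) (nhds 0) := by
        have := (hzero.comp (tendsto_snd :
          Tendsto Prod.snd ((atTop : Filter ℕ) ×ˢ (atTop : Filter ℕ))
            (atTop : Filter ℕ))).const_mul ((2*π)^l1)
        simpa using this
      apply squeeze_zero_norm' _ hT
      filter_upwards [e1, e2] with p h1 h2
      rw [Real.norm_eq_abs]
      refine le_trans (hgen p h1 h2) ?_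
      exact mul_le_mul_of_nonneg_right (Ps_div_le l1 Δf1 p.1) (by positivity)
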